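/- arXiv:1406.5461 — 2 statements merged into one kernel-verified Lean document; each statement's English description precedes it below -/
import Mathlib

section
/- Assume the coexistence condition (ss): r_n/(1+Q_n) > 1. Let (B,P) be a solution of (LV) in Ω. If B_1(0) > 0, then limsup_{t→∞} B_1(t) ≥ s_1. If in addition P_1(0) > 0, then limsup_{t→∞} P_1(t) ≥ min{(r_1 − r_2)/(1 + r_1), (r_1 − 1 − r_1 s_1)/(r_1 s_1 + 1)} (when n = 1 the first term in the minimum is omitted). -/
open Filter Set Real

/-- If `f` has derivative `d ≤ c` on `[T,∞)`, then `f t ≤ f T + c (t-T)`. -/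
lemma lv_affine_le (f d : ℝ → ℝ) (T c : ℝ)
    (hder : ∀ t, T ≤ t → HasDerivAt f (d t) t)
    (hd : ∀ t, T ≤ t → d t ≤ c) :
    ∀ t, T ≤ t → f t ≤ f T + c * (t - T) := by
  intro t ht
  set F := fun u : ℝ => f u - c * u with hF
  have hderF : ∀ u ∈ Set.Ici T, HasDerivAt F (d u - c) u := by
    intro u hu
    have h1 : HasDerivAt (fun y : ℝ => c * y) (c * 1) u := (hasDerivAt_id u).const_mul c
    have h2 := (hder u hu).sub h1
    rw [mul_one] at h2
    exact h2
  have hA : AntitoneOn F (Set.Ici T) := by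
    apply antitoneOn_of_deriv_nonpos (convex_Ici T)
    · exact fun u hu => (hderF u hu).continuousAt.continuousWithinAt
    · intro u hu
      rw [interior_Ici] at hu
      exact (hderF u (Set.mem_Ici.2 (le_of_lt hu))).differentiableAt.differentiableWithinAt
    · intro u hu
      rw [interior_Ici] at hu
      rw [(hderF u (Set.mem_Ici.2 hu.le)).deriv]
      have := hd u hu.le
      linarith
  have h2 := hA (Set.self_mem_Ici (a := T)) (Set.mem_Ici.2 ht) ht
  simp only [hF] at h2
  linarith

lemma lv_affine_ge (f d : ℝ → ℝ) (T c : ℝ)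
    (hder : ∀ t, T ≤ t → HasDerivAt f (d t) t)
    (hd : ∀ t, T ≤ t → c ≤ d t) :
    ∀ t, T ≤ t → f T + c * (t - T) ≤ f t := by
  intro t ht
  have := lv_affine_le (fun u => -f u) (fun u => -d u) T (-c)
    (fun u hu => (hder u hu).neg) (fun u hu => by show -d u ≤ -c; have := hd u hu; linarith) t ht
  linarith

/-- Exponential decay: if `f ≥ 0`, `f' = f g` with `g ≤ -c` on `[T,∞)`. -/
lemma lv_decay (f g : ℝ → ℝ) (T c : ℝ)
    (hnn : ∀ t, T ≤ t → 0 ≤ f t)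
    (hder : ∀ t, T ≤ t → HasDerivAt f (f t * g t) t)
    (hg : ∀ t, T ≤ t → g t ≤ -c) :
    ∀ t, T ≤ t → f t ≤ f T * Real.exp (-(c * (t - T))) := by
  intro t ht
  set h := fun u : ℝ => f u * Real.exp (c * u) with hh
  have hderh : ∀ u, T ≤ u → HasDerivAt h
      (f u * g u * Real.exp (c * u) + f u * (Real.exp (c * u) * (c * 1))) u := by
    intro u hu
    exact (hder u hu).mul (((hasDerivAt_id u).const_mul c).exp)
  have hA : AntitoneOn h (Set.Ici T) := by
    apply antitoneOn_of_deriv_nonpos (convex_Ici T)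
    · exact fun u hu => (hderh u hu).continuousAt.continuousWithinAt
    · intro u hu
      rw [interior_Ici] at hu
      exact (hderh u hu.le).differentiableAt.differentiableWithinAt
    · intro u hu
      rw [interior_Ici] at hu
      rw [(hderh u hu.le).deriv]
      have h1 := hnn u hu.le
      have h2 := hg u hu.le
      have h3 := Real.exp_pos (c * u)
      have key : f u * g u * Real.exp (c * u) + f u * (Real.exp (c * u) * (c * 1))
          = (f u * Real.exp (c * u)) * (g u + c) := by ring
      rw [key]
      exact mul_nonpos_of_nonneg_of_nonpos (mul_nonneg h1 h3.le) (by linarith)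
  have h2 := hA (Set.self_mem_Ici (a := T)) (Set.mem_Ici.2 ht) ht
  simp only [hh] at h2
  have h3 : f t = (f t * Real.exp (c * t)) * Real.exp (-(c * t)) := by
    rw [mul_assoc, ← Real.exp_add]; simp
  rw [h3]
  have h4 : f T * Real.exp (-(c * (t - T))) = (f T * Real.exp (c * T)) * Real.exp (-(c * t)) := by
    rw [mul_assoc, ← Real.exp_add]; ring_nf
  rw [h4]
  exact mul_le_mul_of_nonneg_right h2 (Real.exp_pos _).le

lemma lv_pos (f g : ℝ → ℝ) (T M : ℝ)
    (hnn : ∀ t, T ≤ t → 0 ≤ f t)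
    (hder : ∀ t, T ≤ t → HasDerivAt f (f t * g t) t)
    (hg : ∀ t, T ≤ t → -M ≤ g t)
    (hfT : 0 < f T) : ∀ t, T ≤ t → 0 < f t := by
  intro t ht
  set h := fun u : ℝ => f u * Real.exp (M * u) with hh
  have hderh : ∀ u, T ≤ u → HasDerivAt h
      (f u * g u * Real.exp (M * u) + f u * (Real.exp (M * u) * (M * 1))) u := by
    intro u hu
    exact (hder u hu).mul (((hasDerivAt_id u).const_mul M).exp)
  have hA : MonotoneOn h (Set.Ici T) := by
    apply monotoneOn_of_deriv_nonneg (convex_Ici T)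
    · exact fun u hu => (hderh u hu).continuousAt.continuousWithinAt
    · intro u hu
      rw [interior_Ici] at hu
      exact (hderh u hu.le).differentiableAt.differentiableWithinAt
    · intro u hu
      rw [interior_Ici] at hu
      rw [(hderh u hu.le).deriv]
      have h1 := hnn u hu.le
      have h2 := hg u hu.le
      have h3 := Real.exp_pos (M * u)
      have key : f u * g u * Real.exp (M * u) + f u * (Real.exp (M * u) * (M * 1))
          = (f u * Real.exp (M * u)) * (g u + M) := by ring
      rw [key]
      exact mul_nonneg (mul_nonneg h1 h3.le) (by linarith)
  have h2 := hA (Set.self_mem_Ici (a := T)) (Set.mem_Ici.2 ht) ht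
  simp only [hh] at h2
  have h4 : 0 < f T * Real.exp (M * T) := mul_pos hfT (Real.exp_pos _)
  nlinarith [Real.exp_pos (M * t), hnn t ht]

lemma lv_zero (f g : ℝ → ℝ) (T M : ℝ)
    (hnn : ∀ t, T ≤ t → 0 ≤ f t)
    (hder : ∀ t, T ≤ t → HasDerivAt f (f t * g t) t)
    (hg : ∀ t, T ≤ t → g t ≤ M)
    (hfT : f T = 0) : ∀ t, T ≤ t → f t = 0 := by
  intro t ht
  have := lv_decay f g T (-M) hnn hder (by intro u hu; simpa using hg u hu) t ht
  rw [hfT] at this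
  have h0 : f t ≤ 0 := by simpa using this
  exact le_antisymm h0 (hnn t ht)

/-- Trap lemma: if `f' > 0` whenever `f ≤ a` (on `[T,∞)`), then `f` stays above `min (f T) a`. -/
lemma lv_trap (f d : ℝ → ℝ) (T a : ℝ)
    (hder : ∀ t, T ≤ t → HasDerivAt f (d t) t)
    (hpos : ∀ t, T ≤ t → f t ≤ a → 0 < d t) :
    ∀ t, T ≤ t → min (f T) a ≤ f t := by
  intro t ht
  by_contra hcon
  push_neg at hcon
  set c := min (f T) a with hc
  set A := {u : ℝ | u ∈ Set.Icc T t ∧ c ≤ f u} with hA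
  have hcont : ContinuousOn f (Set.Icc T t) :=
    fun u hu => (hder u hu.1).continuousAt.continuousWithinAt
  have hAclosed : IsClosed A := by
    have : A = Set.Icc T t ∩ f ⁻¹' (Set.Ici c) := by
      ext u; simp [hA, Set.mem_Icc, and_comm]
    rw [this]
    exact ContinuousOn.preimage_isClosed_of_isClosed hcont isClosed_Icc isClosed_Ici
  have hAne : A.Nonempty := ⟨T, ⟨le_rfl, ht⟩, min_le_left _ _⟩
  have hAbdd : BddAbove A := ⟨t, fun u hu => hu.1.2⟩
  set τ := sSup A with hτ
  have hτA : τ ∈ A := hAclosed.csSup_mem hAne hAbdd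
  have hτT : T ≤ τ := hτA.1.1
  have hτt : τ ≤ t := hτA.1.2
  have hfτ : c ≤ f τ := hτA.2
  have hτlt : τ < t := by
    rcases lt_or_eq_of_le hτt with h | h
    · exact h
    · exfalso; rw [h] at hfτ; linarith
  have hless : ∀ u, u ∈ Set.Ioc τ t → f u < c := by
    intro u hu
    by_contra hge
    push_neg at hge
    have : u ∈ A := ⟨⟨le_trans hτT hu.1.le, hu.2⟩, hge⟩
    have := le_csSup hAbdd this
    exact absurd this (not_le.2 hu.1)
  have hmono : StrictMonoOn f (Set.Icc τ t) := by
    apply strictMonoOn_of_deriv_pos (convex_Icc τ t)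
    · exact hcont.mono (Set.Icc_subset_Icc_left hτT)
    · intro u hu
      rw [interior_Icc] at hu
      have huT : T ≤ u := le_trans hτT hu.1.le
      have : f u < c := hless u ⟨hu.1, hu.2.le⟩
      have hfa : f u ≤ a := le_trans this.le (min_le_right _ _)
      rw [(hder u huT).deriv]
      exact hpos u huT hfa
  have := hmono (Set.left_mem_Icc.2 hτt) (Set.right_mem_Icc.2 hτt) hτlt
  have h2 := hless t ⟨hτlt, le_rfl⟩
  linarith

lemma lv_growth_contra (f d : ℝ → ℝ) (T c Cb : ℝ) (hc : 0 < c)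
    (hder : ∀ t, T ≤ t → HasDerivAt f (d t) t)
    (hd : ∀ t, T ≤ t → c ≤ d t)
    (hb : ∀ t, T ≤ t → f t ≤ Cb) : False := by
  set t := max T (T + (Cb - f T) / c + 1) with htdef
  have ht : T ≤ t := le_max_left _ _
  have h1 := lv_affine_ge f d T c hder hd t ht
  have h2 := hb t ht
  have h3 : T + (Cb - f T) / c + 1 ≤ t := le_max_right _ _
  have h4 : (Cb - f T) / c * c = Cb - f T := div_mul_cancel₀ _ (ne_of_gt hc)
  nlinarith

def DiesOut (f : ℝ → ℝ) : Prop := Tendsto f atTop (nhds 0)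

lemma diesOut_of_exp (f : ℝ → ℝ) (T A c : ℝ) (hc : 0 < c)
    (hnn : ∀ t, T ≤ t → 0 ≤ f t)
    (hb : ∀ t, T ≤ t → f t ≤ A * Real.exp (-(c * t))) : DiesOut f := by
  have hg : Tendsto (fun t : ℝ => A * Real.exp (-(c * t))) atTop (nhds 0) := by
    have h1 : Tendsto (fun t : ℝ => -(c * t)) atTop atBot := by
      have h2 : Tendsto (fun t : ℝ => c * t) atTop atTop := tendsto_id.const_mul_atTop hc
      exact tendsto_neg_atTop_atBot.comp h2
    have := (Real.tendsto_exp_atBot.comp h1).const_mul A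
    simpa using this
  apply squeeze_zero' (eventually_atTop.2 ⟨T, hnn⟩) (eventually_atTop.2 ⟨T, hb⟩) hg

lemma diesOut_of_eventually_zero (f : ℝ → ℝ) (T : ℝ) (h : ∀ t, T ≤ t → f t = 0) :
    DiesOut f := by
  apply squeeze_zero' (g := fun _ => (0:ℝ)) (eventually_atTop.2 ⟨T, fun t ht => (h t ht).ge⟩)
    (eventually_atTop.2 ⟨T, fun t ht => (h t ht).le⟩) tendsto_const_nhds

lemma diesOut_small (f : ℝ → ℝ) (h : DiesOut f) (ε : ℝ) (hε : 0 < ε) :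
    ∃ T, 0 ≤ T ∧ ∀ t, T ≤ t → f t ≤ ε := by
  have := h.eventually_lt_const hε
  rw [eventually_atTop] at this
  obtain ⟨T0, hT0⟩ := this
  exact ⟨max T0 0, le_max_right _ _, fun t ht => (hT0 t (le_trans (le_max_left _ _) ht)).le⟩

lemma diesOut_sum (F : Finset ℕ) (f : ℕ → ℝ → ℝ) (h : ∀ i ∈ F, DiesOut (f i)) :
    DiesOut (fun t => ∑ i ∈ F, f i t) := by
  have := tendsto_finset_sum F (fun i hi => h i hi)
  simpa [DiesOut] using this
noncomputable def lvQ (r s : ℕ → ℝ) (k : ℕ) : ℝ :=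
  (∑ i ∈ Finset.Icc 1 (k - 1), s i * (r i - r (i + 1))) + s k * r k

def IsSolutionLV (n : ℕ) (r s : ℕ → ℝ) (B P : ℕ → ℝ → ℝ) : Prop :=
  (∀ i ∈ Finset.Icc 1 n, ∀ t : ℝ, 0 ≤ t →
      HasDerivAt (B i)
        (r i * B i t * (1 - 1 / r i - ∑ j ∈ Finset.Icc 1 n, (B j t + s j * P j t))
          - B i t * ∑ j ∈ Finset.Icc i n, P j t) t) ∧
  (∀ i ∈ Finset.Icc 1 n, ∀ t : ℝ, 0 ≤ t →
      HasDerivAt (P i) ((s i)⁻¹ * P i t * ((∑ j ∈ Finset.Icc 1 i, B j t) - s i)) t) ∧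
  (∀ t : ℝ, 0 ≤ t → (∀ i ∈ Finset.Icc 1 n, 0 ≤ B i t ∧ 0 ≤ P i t) ∧
      (∑ i ∈ Finset.Icc 1 n, (B i t + s i * P i t)) ≤ 1)

structure LVCtx where
  n : ℕ
  r : ℕ → ℝ
  s : ℕ → ℝ
  B : ℕ → ℝ → ℝ
  P : ℕ → ℝ → ℝ
  hn : 1 ≤ n
  hr : ∀ i, 1 ≤ i → i < n → r (i + 1) < r i
  hrn : 1 < r n
  hs1 : 0 < s 1
  hs : ∀ i, 1 ≤ i → i < n → s i < s (i + 1)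
  hkey : 1 + s 1 * r 1 < r 1
  hsol : IsSolutionLV n r s B P
  hB10 : 0 < B 1 0

namespace LVCtx

variable (c : LVCtx)

noncomputable def SB (t : ℝ) : ℝ := ∑ j ∈ Finset.Icc 1 c.n, (c.B j t + c.s j * c.P j t)
noncomputable def W (i : ℕ) (t : ℝ) : ℝ := ∑ j ∈ Finset.Icc 1 i, c.B j t
noncomputable def PS (i : ℕ) (t : ℝ) : ℝ := ∑ j ∈ Finset.Icc i c.n, c.P j t
noncomputable def gB (i : ℕ) (t : ℝ) : ℝ := c.r i * (1 - 1 / c.r i - c.SB t) - c.PS i t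
noncomputable def gP (i : ℕ) (t : ℝ) : ℝ := (c.s i)⁻¹ * (c.W i t - c.s i)

lemma rle : ∀ i j : ℕ, 1 ≤ i → i ≤ j → j ≤ c.n → c.r j ≤ c.r i := by
  intro i j hi hij hjn
  induction j, hij using Nat.le_induction with
  | base => exact le_rfl
  | succ j hij ih =>
    have h1 : j ≤ c.n := le_trans (Nat.le_succ j) hjn
    have h2 := c.hr j (le_trans hi hij) (Nat.lt_of_succ_le hjn)
    exact le_trans h2.le (ih h1)

lemma rlt : ∀ i j : ℕ, 1 ≤ i → i < j → j ≤ c.n → c.r j < c.r i := by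
  intro i j hi hij hjn
  have h2 := c.hr i hi (lt_of_lt_of_le hij hjn)
  have h1 : c.r j ≤ c.r (i + 1) := c.rle (i+1) j (le_trans hi (Nat.le_succ i)) hij hjn
  exact lt_of_le_of_lt h1 h2

lemma rgt1 : ∀ i : ℕ, 1 ≤ i → i ≤ c.n → 1 < c.r i :=
  fun i hi hin => lt_of_lt_of_le c.hrn (c.rle i c.n hi hin le_rfl)

lemma rpos : ∀ i : ℕ, 1 ≤ i → i ≤ c.n → 0 < c.r i :=
  fun i hi hin => lt_trans one_pos (c.rgt1 i hi hin)

lemma sle : ∀ i j : ℕ, 1 ≤ i → i ≤ j → j ≤ c.n → c.s i ≤ c.s j := by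
  intro i j hi hij hjn
  induction j, hij using Nat.le_induction with
  | base => exact le_rfl
  | succ j hij ih =>
    have h1 : j ≤ c.n := le_trans (Nat.le_succ j) hjn
    have h2 := c.hs j (le_trans hi hij) (Nat.lt_of_succ_le hjn)
    exact le_trans (ih h1) h2.le

lemma slt : ∀ i j : ℕ, 1 ≤ i → i < j → j ≤ c.n → c.s i < c.s j := by
  intro i j hi hij hjn
  have h2 := c.hs i hi (lt_of_lt_of_le hij hjn)
  have h1 : c.s (i + 1) ≤ c.s j := c.sle (i+1) j (le_trans hi (Nat.le_succ i)) hij hjn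
  exact lt_of_lt_of_le h2 h1

lemma spos : ∀ i : ℕ, 1 ≤ i → i ≤ c.n → 0 < c.s i := by
  intro i hi hin
  rcases Nat.eq_or_lt_of_le hi with h | h
  · rw [← h]; exact c.hs1
  · exact lt_of_lt_of_le c.hs1 (c.sle 1 i le_rfl hi hin)

lemma Bnn : ∀ i : ℕ, 1 ≤ i → i ≤ c.n → ∀ t : ℝ, 0 ≤ t → 0 ≤ c.B i t := by
  intro i hi hin t ht
  exact ((c.hsol.2.2 t ht).1 i (Finset.mem_Icc.2 ⟨hi, hin⟩)).1

lemma Pnn : ∀ i : ℕ, 1 ≤ i → i ≤ c.n → ∀ t : ℝ, 0 ≤ t → 0 ≤ c.P i t := by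
  intro i hi hin t ht
  exact ((c.hsol.2.2 t ht).1 i (Finset.mem_Icc.2 ⟨hi, hin⟩)).2

lemma SBle : ∀ t : ℝ, 0 ≤ t → c.SB t ≤ 1 := fun t ht => (c.hsol.2.2 t ht).2

lemma term_nn : ∀ t : ℝ, 0 ≤ t → ∀ j ∈ Finset.Icc 1 c.n, 0 ≤ c.B j t + c.s j * c.P j t := by
  intro t ht j hj
  rw [Finset.mem_Icc] at hj
  have h1 := c.Bnn j hj.1 hj.2 t ht
  have h2 := c.Pnn j hj.1 hj.2 t ht
  have h3 := c.spos j hj.1 hj.2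
  nlinarith

lemma SBnn : ∀ t : ℝ, 0 ≤ t → 0 ≤ c.SB t := by
  intro t ht
  exact Finset.sum_nonneg (c.term_nn t ht)

lemma single_le_SB : ∀ i : ℕ, 1 ≤ i → i ≤ c.n → ∀ t : ℝ, 0 ≤ t →
    c.B i t + c.s i * c.P i t ≤ c.SB t := by
  intro i hi hin t ht
  exact Finset.single_le_sum (c.term_nn t ht) (Finset.mem_Icc.2 ⟨hi, hin⟩)

lemma Ble1 : ∀ i : ℕ, 1 ≤ i → i ≤ c.n → ∀ t : ℝ, 0 ≤ t → c.B i t ≤ 1 := by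
  intro i hi hin t ht
  have h1 := c.single_le_SB i hi hin t ht
  have h2 := c.SBle t ht
  have h3 := c.Pnn i hi hin t ht
  have h4 := c.spos i hi hin
  nlinarith

lemma Ple : ∀ i : ℕ, 1 ≤ i → i ≤ c.n → ∀ t : ℝ, 0 ≤ t → c.P i t ≤ 1 / c.s 1 := by
  intro i hi hin t ht
  have h1 := c.single_le_SB i hi hin t ht
  have h2 := c.SBle t ht
  have h3 := c.Bnn i hi hin t ht
  have h4 : c.s 1 ≤ c.s i := by
    rcases Nat.eq_or_lt_of_le hi with h | h
    · rw [← h]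
    · exact (c.sle 1 i le_rfl hi hin)
  have h5 := c.hs1
  rw [le_div_iff₀ h5]
  nlinarith [c.Pnn i hi hin t ht]

lemma PSnn : ∀ i : ℕ, 1 ≤ i → ∀ t : ℝ, 0 ≤ t → 0 ≤ c.PS i t := by
  intro i hi t ht
  apply Finset.sum_nonneg
  intro j hj
  rw [Finset.mem_Icc] at hj
  exact c.Pnn j (le_trans hi hj.1) hj.2 t ht

lemma PSle : ∀ i : ℕ, 1 ≤ i → ∀ t : ℝ, 0 ≤ t → c.PS i t ≤ c.n / c.s 1 := by
  intro i hi t ht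
  have h1 : c.PS i t ≤ (Finset.Icc i c.n).card • (1 / c.s 1) := by
    apply Finset.sum_le_card_nsmul
    intro j hj
    rw [Finset.mem_Icc] at hj
    exact c.Ple j (le_trans hi hj.1) hj.2 t ht
  have h2 : (Finset.Icc i c.n).card ≤ c.n := by
    rw [Nat.card_Icc]; omega
  have h3 : ((Finset.Icc i c.n).card : ℝ) * (1 / c.s 1) ≤ (c.n : ℝ) * (1 / c.s 1) := by
    apply mul_le_mul_of_nonneg_right _ (by have := c.hs1; positivity)
    exact_mod_cast h2
  rw [nsmul_eq_mul] at h1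
  calc c.PS i t ≤ _ := h1
    _ ≤ (c.n : ℝ) * (1 / c.s 1) := h3
    _ = c.n / c.s 1 := by ring

lemma Wnn : ∀ i : ℕ, i ≤ c.n → ∀ t : ℝ, 0 ≤ t → 0 ≤ c.W i t := by
  intro i hin t ht
  apply Finset.sum_nonneg
  intro j hj
  rw [Finset.mem_Icc] at hj
  exact c.Bnn j hj.1 (le_trans hj.2 hin) t ht

lemma Wle : ∀ i : ℕ, i ≤ c.n → ∀ t : ℝ, 0 ≤ t → c.W i t ≤ c.SB t := by
  intro i hin t ht
  have h1 : c.W i t ≤ ∑ j ∈ Finset.Icc 1 c.n, c.B j t := by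
    apply Finset.sum_le_sum_of_subset_of_nonneg
    · exact Finset.Icc_subset_Icc_right hin
    · intro j hj _
      rw [Finset.mem_Icc] at hj
      exact c.Bnn j hj.1 hj.2 t ht
  have h2 : ∑ j ∈ Finset.Icc 1 c.n, c.B j t ≤ c.SB t := by
    apply Finset.sum_le_sum
    intro j hj
    rw [Finset.mem_Icc] at hj
    have := c.Pnn j hj.1 hj.2 t ht
    have := c.spos j hj.1 hj.2
    nlinarith
  linarith

lemma Wle1 : ∀ i : ℕ, i ≤ c.n → ∀ t : ℝ, 0 ≤ t → c.W i t ≤ 1 :=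
  fun i hin t ht => le_trans (c.Wle i hin t ht) (c.SBle t ht)

lemma dB : ∀ i : ℕ, 1 ≤ i → i ≤ c.n → ∀ t : ℝ, 0 ≤ t →
    HasDerivAt (c.B i) (c.B i t * c.gB i t) t := by
  intro i hi hin t ht
  have h := c.hsol.1 i (Finset.mem_Icc.2 ⟨hi, hin⟩) t ht
  have heq : c.r i * c.B i t * (1 - 1 / c.r i - ∑ j ∈ Finset.Icc 1 c.n, (c.B j t + c.s j * c.P j t))
      - c.B i t * ∑ j ∈ Finset.Icc i c.n, c.P j t = c.B i t * c.gB i t := by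
    simp only [gB, SB, PS]; ring
  rw [heq] at h
  exact h

lemma dP : ∀ i : ℕ, 1 ≤ i → i ≤ c.n → ∀ t : ℝ, 0 ≤ t →
    HasDerivAt (c.P i) (c.P i t * c.gP i t) t := by
  intro i hi hin t ht
  have h := c.hsol.2.1 i (Finset.mem_Icc.2 ⟨hi, hin⟩) t ht
  have heq : (c.s i)⁻¹ * c.P i t * ((∑ j ∈ Finset.Icc 1 i, c.B j t) - c.s i)
      = c.P i t * c.gP i t := by
    simp only [gP, W]; ring
  rw [heq] at h
  exact h

lemma gB_eq : ∀ i : ℕ, 1 ≤ i → i ≤ c.n → ∀ t : ℝ,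
    c.gB i t = c.r i * (1 - c.SB t) - 1 - c.PS i t := by
  intro i hi hin t
  have h := c.rpos i hi hin
  simp only [gB]
  field_simp
  ring

lemma gB_lb : ∀ i : ℕ, 1 ≤ i → i ≤ c.n → ∀ t : ℝ, 0 ≤ t →
    -(1 + c.n / c.s 1) ≤ c.gB i t := by
  intro i hi hin t ht
  rw [c.gB_eq i hi hin t]
  have h1 := c.SBle t ht
  have h2 := c.PSle i hi t ht
  have h3 := c.rpos i hi hin
  nlinarith

lemma gB_ub : ∀ i : ℕ, 1 ≤ i → i ≤ c.n → ∀ t : ℝ, 0 ≤ t → c.gB i t ≤ c.r 1 := by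
  intro i hi hin t ht
  rw [c.gB_eq i hi hin t]
  have h1 := c.SBnn t ht
  have h2 := c.PSnn i hi t ht
  have h3 := c.rpos i hi hin
  have h4 := c.rle 1 i le_rfl hi hin
  nlinarith

lemma gP_lb : ∀ i : ℕ, 1 ≤ i → i ≤ c.n → ∀ t : ℝ, 0 ≤ t → -1 ≤ c.gP i t := by
  intro i hi hin t ht
  simp only [gP]
  have h1 := c.Wnn i hin t ht
  have h2 := c.spos i hi hin
  have h3 : 0 < (c.s i)⁻¹ := by positivity
  have h5 : (c.s i)⁻¹ * (c.W i t - c.s i) = (c.s i)⁻¹ * c.W i t - 1 := by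
    field_simp
  rw [h5]
  nlinarith [mul_nonneg h3.le h1]

lemma gP_ub : ∀ i : ℕ, 1 ≤ i → i ≤ c.n → ∀ t : ℝ, 0 ≤ t → c.gP i t ≤ 1 / c.s 1 := by
  intro i hi hin t ht
  simp only [gP]
  have h1 := c.Wle1 i hin t ht
  have h2 := c.spos i hi hin
  have h4 : c.s 1 ≤ c.s i := by
    rcases Nat.eq_or_lt_of_le hi with h | h
    · rw [← h]
    · exact (c.sle 1 i le_rfl hi hin)
  have h5 := c.hs1
  have h6 : (c.s i)⁻¹ * (c.W i t - c.s i) ≤ (c.s i)⁻¹ * (1 - c.s i) := by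
    apply mul_le_mul_of_nonneg_left (by linarith) (by positivity)
  calc (c.s i)⁻¹ * (c.W i t - c.s i) ≤ (c.s i)⁻¹ * (1 - c.s i) := h6
    _ = 1 / c.s i - 1 := by field_simp
    _ ≤ 1 / c.s 1 := by
        have : 1 / c.s i ≤ 1 / c.s 1 := by
          apply one_div_le_one_div_of_le h5 h4
        linarith

lemma posB : ∀ i : ℕ, 1 ≤ i → i ≤ c.n → 0 < c.B i 0 → ∀ t : ℝ, 0 ≤ t → 0 < c.B i t := by
  intro i hi hin h0 t ht
  exact lv_pos (c.B i) (c.gB i) 0 (1 + c.n / c.s 1)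
    (fun u hu => c.Bnn i hi hin u hu) (fun u hu => c.dB i hi hin u hu)
    (fun u hu => c.gB_lb i hi hin u hu) h0 t ht

lemma zeroB : ∀ i : ℕ, 1 ≤ i → i ≤ c.n → c.B i 0 = 0 → ∀ t : ℝ, 0 ≤ t → c.B i t = 0 := by
  intro i hi hin h0 t ht
  exact lv_zero (c.B i) (c.gB i) 0 (c.r 1)
    (fun u hu => c.Bnn i hi hin u hu) (fun u hu => c.dB i hi hin u hu)
    (fun u hu => c.gB_ub i hi hin u hu) h0 t ht

lemma posP : ∀ i : ℕ, 1 ≤ i → i ≤ c.n → 0 < c.P i 0 → ∀ t : ℝ, 0 ≤ t → 0 < c.P i t := by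
  intro i hi hin h0 t ht
  exact lv_pos (c.P i) (c.gP i) 0 1
    (fun u hu => c.Pnn i hi hin u hu) (fun u hu => c.dP i hi hin u hu)
    (fun u hu => c.gP_lb i hi hin u hu) h0 t ht

lemma zeroP : ∀ i : ℕ, 1 ≤ i → i ≤ c.n → c.P i 0 = 0 → ∀ t : ℝ, 0 ≤ t → c.P i t = 0 := by
  intro i hi hin h0 t ht
  exact lv_zero (c.P i) (c.gP i) 0 (1 / c.s 1)
    (fun u hu => c.Pnn i hi hin u hu) (fun u hu => c.dP i hi hin u hu)
    (fun u hu => c.gP_ub i hi hin u hu) h0 t ht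

lemma dlogB : ∀ i : ℕ, 1 ≤ i → i ≤ c.n → 0 < c.B i 0 → ∀ t : ℝ, 0 ≤ t →
    HasDerivAt (fun u => Real.log (c.B i u)) (c.gB i t) t := by
  intro i hi hin h0 t ht
  have hpos := c.posB i hi hin h0 t ht
  have h := (c.dB i hi hin t ht).log (ne_of_gt hpos)
  have heq : c.B i t * c.gB i t / c.B i t = c.gB i t := by
    field_simp
  rw [heq] at h
  exact h

lemma dlogP : ∀ i : ℕ, 1 ≤ i → i ≤ c.n → 0 < c.P i 0 → ∀ t : ℝ, 0 ≤ t →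
    HasDerivAt (fun u => Real.log (c.P i u)) (c.gP i t) t := by
  intro i hi hin h0 t ht
  have hpos := c.posP i hi hin h0 t ht
  have h := (c.dP i hi hin t ht).log (ne_of_gt hpos)
  have heq : c.P i t * c.gP i t / c.P i t = c.gP i t := by
    field_simp
  rw [heq] at h
  exact h

lemma sum_Icc_split (f : ℕ → ℝ) (a m b : ℕ) (h1 : a ≤ m + 1) (h2 : m ≤ b) :
    ∑ j ∈ Finset.Icc a b, f j
      = (∑ j ∈ Finset.Icc a m, f j) + ∑ j ∈ Finset.Icc (m+1) b, f j := by
  rw [← Finset.Ico_add_one_right_eq_Icc (a := a) (b := b), ← Finset.Ico_add_one_right_eq_Icc (a := a) (b := m),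
    ← Finset.Ico_add_one_right_eq_Icc (a := m+1) (b := b)]
  exact (Finset.sum_Ico_consecutive f h1 (by omega)).symm

lemma PS1_split (i : ℕ) (hi : 2 ≤ i) (hin : i ≤ c.n) (t : ℝ) :
    c.PS 1 t = (∑ j ∈ Finset.Icc 1 (i-1), c.P j t) + c.PS i t := by
  simp only [PS]
  have h : i - 1 + 1 = i := by omega
  have := sum_Icc_split (fun j => c.P j t) 1 (i-1) c.n (by omega) (by omega)
  rw [h] at this
  exact this

lemma W_split (i : ℕ) (hi : 1 ≤ i) (t : ℝ) :
    c.W i t = c.B 1 t + ∑ j ∈ Finset.Icc 2 i, c.B j t := by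
  simp only [W]
  have := sum_Icc_split (fun j => c.B j t) 1 1 i (by omega) (by omega)
  simpa using this

lemma SB_split (t : ℝ) :
    c.SB t = (c.B 1 t + c.s 1 * c.P 1 t)
      + ∑ j ∈ Finset.Icc 2 c.n, (c.B j t + c.s j * c.P j t) := by
  simp only [SB]
  have := sum_Icc_split (fun j => c.B j t + c.s j * c.P j t) 1 1 c.n (by omega) c.hn
  simpa using this

lemma PS1_split2 (t : ℝ) :
    c.PS 1 t = c.P 1 t + ∑ j ∈ Finset.Icc 2 c.n, c.P j t := by
  simp only [PS]
  have := sum_Icc_split (fun j => c.P j t) 1 1 c.n (by omega) c.hn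
  simpa using this

end LVCtx
lemma diesOut_of_exp' (f : ℝ → ℝ) (T C cc : ℝ) (hc : 0 < cc)
    (hnn : ∀ t, T ≤ t → 0 ≤ f t)
    (hb : ∀ t, T ≤ t → f t ≤ Real.exp (C - cc * t)) : DiesOut f :=
  diesOut_of_exp f T (Real.exp C) cc hc hnn (fun t ht => by
    have h := hb t ht
    rwa [show C - cc*t = C + -(cc*t) by ring, Real.exp_add] at h)

lemma diesOut_of_decay (f g : ℝ → ℝ) (T cc : ℝ) (hc : 0 < cc)
    (hnn : ∀ t, T ≤ t → 0 ≤ f t)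
    (hder : ∀ t, T ≤ t → HasDerivAt f (f t * g t) t)
    (hg : ∀ t, T ≤ t → g t ≤ -cc) : DiesOut f := by
  rcases le_or_gt (f T) 0 with hfT | hfT
  · apply diesOut_of_eventually_zero f T
    intro t ht
    have h1 := lv_decay f g T cc hnn hder hg t ht
    have h2 := hnn t ht
    nlinarith [Real.exp_pos (-(cc * (t - T)))]
  · apply diesOut_of_exp' f T (Real.log (f T) + cc * T) cc hc hnn
    intro t ht
    have h1 := lv_decay f g T cc hnn hder hg t ht
    calc f t ≤ f T * Real.exp (-(cc * (t - T))) := h1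
      _ = Real.exp (Real.log (f T) + cc * T - cc * t) := by
          rw [show Real.log (f T) + cc * T - cc * t
              = Real.log (f T) + -(cc * (t - T)) by ring, Real.exp_add, Real.exp_log hfT]

namespace LVCtx

variable (c : LVCtx)

lemma extinction (p Tp : ℝ) (hTp : 0 ≤ Tp)
    (hP1p : ∀ t, Tp ≤ t → c.P 1 t ≤ p)
    (hthresh : ∀ i, 2 ≤ i → i ≤ c.n → p * c.r i < c.r 1 - c.r i)
    (hPkill : ∀ i, 2 ≤ i → i ≤ c.n →
      (∀ j, 2 ≤ j → j ≤ i → DiesOut (c.B j)) → DiesOut (c.P i)) :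
    ∀ i, 2 ≤ i → i ≤ c.n → DiesOut (c.B i) ∧ DiesOut (c.P i) := by
  intro i
  induction i using Nat.strong_induction_on with
  | _ i IH =>
  intro h2 hin
  have hi1 : 1 ≤ i := by omega
  have hr1 : 0 < c.r 1 := c.rpos 1 le_rfl c.hn
  have hripos : 0 < c.r i := c.rpos i hi1 hin
  have hrile : c.r i ≤ c.r 1 := c.rle 1 i le_rfl hi1 hin
  have hBdies : DiesOut (c.B i) := by
    by_cases h0 : c.B i 0 = 0
    · exact diesOut_of_eventually_zero _ 0 (c.zeroB i hi1 hin h0)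
    have h0' : 0 < c.B i 0 := lt_of_le_of_ne (c.Bnn i hi1 hin 0 le_rfl) (Ne.symm h0)
    set ci := (c.r 1 - c.r i - p * c.r i) / (2 * c.r 1) with hci_def
    have hnum : 0 < c.r 1 - c.r i - p * c.r i := by
      have := hthresh i h2 hin; linarith
    have hci : 0 < ci := by apply div_pos hnum; linarith
    -- the tail sum of P over Icc 2 (i-1) dies out
    have hQ : DiesOut (fun t => ∑ j ∈ Finset.Icc 2 (i-1), c.P j t) := by
      apply diesOut_sum
      intro j hj
      rw [Finset.mem_Icc] at hj
      exact (IH j (by omega) hj.1 (by omega)).2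
    obtain ⟨T1, hT1nn, hT1⟩ := diesOut_small _ hQ ci hci
    set T := max Tp T1 with hT_def
    have hTnn : (0:ℝ) ≤ T := le_trans hTp (le_max_left _ _)
    set a := c.r i / c.r 1 with ha_def
    have ha0 : 0 < a := by positivity
    have ha1 : a ≤ 1 := by rw [div_le_one hr1]; exact hrile
    set K := fun u : ℝ => Real.log (c.B i u) - a * Real.log (c.B 1 u) with hK_def
    have hderK : ∀ u, T ≤ u → HasDerivAt K (c.gB i u - a * c.gB 1 u) u := by
      intro u hu
      have hu0 : (0:ℝ) ≤ u := le_trans hTnn hu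
      exact (c.dlogB i hi1 hin h0' u hu0).sub
        ((c.dlogB 1 le_rfl c.hn c.hB10 u hu0).const_mul a)
    have hbound : ∀ u, T ≤ u → c.gB i u - a * c.gB 1 u ≤ -ci := by
      intro u hu
      have hu0 : (0:ℝ) ≤ u := le_trans hTnn hu
      rw [c.gB_eq i hi1 hin u, c.gB_eq 1 le_rfl c.hn u]
      have hsplit := c.PS1_split i h2 hin u
      have hsplit2 : (∑ j ∈ Finset.Icc 1 (i-1), c.P j u)
          = c.P 1 u + ∑ j ∈ Finset.Icc 2 (i-1), c.P j u := by
        have h := sum_Icc_split (fun j => c.P j u) 1 1 (i-1) (by omega) (by omega)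
        simpa using h
      have hP1u : c.P 1 u ≤ p := hP1p u (le_trans (le_max_left _ _) hu)
      have hQu : ∑ j ∈ Finset.Icc 2 (i-1), c.P j u ≤ ci := hT1 u (le_trans (le_max_right _ _) hu)
      have hPSi : 0 ≤ c.PS i u := c.PSnn i hi1 u hu0
      have hSB1 : c.SB u ≤ 1 := c.SBle u hu0
      have hSBnn : 0 ≤ c.SB u := c.SBnn u hu0
      have hP1nn : 0 ≤ c.P 1 u := c.Pnn 1 le_rfl c.hn u hu0
      have hQnn : 0 ≤ ∑ j ∈ Finset.Icc 2 (i-1), c.P j u := by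
        apply Finset.sum_nonneg; intro j hj
        rw [Finset.mem_Icc] at hj
        exact c.Pnn j (by omega) (by omega) u hu0
      -- key algebra
      have haeq : a * c.r 1 = c.r i := by
        rw [ha_def]; exact div_mul_cancel₀ _ (ne_of_gt hr1)
      have hexp : c.r i * (1 - c.SB u) - 1 - c.PS i u
          - a * (c.r 1 * (1 - c.SB u) - 1 - c.PS 1 u)
          = (a - 1) + a * (c.P 1 u + ∑ j ∈ Finset.Icc 2 (i-1), c.P j u)
            + (a - 1) * c.PS i u := by
        rw [hsplit, hsplit2]
        nlinarith [haeq]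
      rw [hexp]
      have h1 : a * (c.P 1 u + ∑ j ∈ Finset.Icc 2 (i-1), c.P j u) ≤ a * (p + ci) := by
        apply mul_le_mul_of_nonneg_left (by linarith) ha0.le
      have h2' : (a - 1) * c.PS i u ≤ 0 := mul_nonpos_of_nonpos_of_nonneg (by linarith) hPSi
      have hgoal : (a - 1) + a * (p + ci) ≤ -ci := by
        rw [ha_def]
        rw [div_sub_one (ne_of_gt hr1), div_mul_eq_mul_div, ← add_div, div_le_iff₀ hr1]
        have hcieq : ci * (2 * c.r 1) = c.r 1 - c.r i - p * c.r i := by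
          rw [hci_def]; field_simp
        nlinarith [mul_nonneg hci.le (sub_nonneg.2 hrile)]
      linarith
    have haff := lv_affine_le K _ T (-ci) hderK hbound
    have hBipos : ∀ u, 0 ≤ u → 0 < c.B i u := c.posB i hi1 hin h0'
    apply diesOut_of_exp' (c.B i) T (K T + ci * T) ci hci
      (fun u hu => (c.Bnn i hi1 hin u (le_trans hTnn hu)))
    intro u hu
    have hu0 : (0:ℝ) ≤ u := le_trans hTnn hu
    have h3 : Real.log (c.B i u) = K u + a * Real.log (c.B 1 u) := by
      simp only [hK_def]; ring
    have h4 : a * Real.log (c.B 1 u) ≤ 0 := by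
      apply mul_nonpos_of_nonneg_of_nonpos ha0.le
      exact Real.log_nonpos (c.Bnn 1 le_rfl c.hn u hu0) (c.Ble1 1 le_rfl c.hn u hu0)
    have h5 := haff u hu
    have h6 : Real.log (c.B i u) ≤ K T + ci * T - ci * u := by
      rw [h3]; nlinarith
    calc c.B i u = Real.exp (Real.log (c.B i u)) := (Real.exp_log (hBipos u hu0)).symm
      _ ≤ Real.exp (K T + ci * T - ci * u) := by
          apply Real.exp_le_exp.2; linarith
  exact ⟨hBdies, hPkill i h2 hin (fun j hj2 hji => by
    rcases Nat.eq_or_lt_of_le hji with h | h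
    · rw [h]; exact hBdies
    · exact (IH j h hj2 (by omega)).1)⟩

end LVCtx
namespace LVCtx

variable (c : LVCtx)

lemma W1_eq (t : ℝ) : c.W 1 t = c.B 1 t := by simp [W]

lemma claimA (ε T0 : ℝ) (hε : 0 < ε) (hT0 : 0 ≤ T0)
    (hsmall : ∀ t, T0 ≤ t → c.B 1 t ≤ c.s 1 - ε) : False := by
  have hr1 : 0 < c.r 1 := c.rpos 1 le_rfl c.hn
  have hs1 := c.hs1
  -- P1 dies out
  have hP1dies : DiesOut (c.P 1) := by
    apply diesOut_of_decay (c.P 1) (c.gP 1) T0 (ε / c.s 1) (by positivity)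
      (fun u hu => c.Pnn 1 le_rfl c.hn u (le_trans hT0 hu))
      (fun u hu => c.dP 1 le_rfl c.hn u (le_trans hT0 hu))
    intro u hu
    show (c.s 1)⁻¹ * (c.W 1 u - c.s 1) ≤ -(ε / c.s 1)
    have h2 : c.W 1 u - c.s 1 ≤ -ε := by
      rw [c.W1_eq u]; have := hsmall u hu; linarith
    calc (c.s 1)⁻¹ * (c.W 1 u - c.s 1) ≤ (c.s 1)⁻¹ * (-ε) :=
          mul_le_mul_of_nonneg_left h2 (by positivity)
      _ = -(ε / c.s 1) := by rw [div_eq_mul_inv]; ring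
  -- choose the threshold p
  set p := if 2 ≤ c.n then (c.r 1 - c.r 2) / (2 * c.r 1) else 1 with hp_def
  have hppos : 0 < p := by
    rw [hp_def]; split_ifs with h
    · have := c.rlt 1 2 le_rfl one_lt_two h
      apply div_pos (by linarith) (by linarith)
    · exact one_pos
  have hthresh : ∀ i, 2 ≤ i → i ≤ c.n → p * c.r i < c.r 1 - c.r i := by
    intro i h2 hin
    have h2n : 2 ≤ c.n := le_trans h2 hin
    rw [hp_def, if_pos h2n]
    have hr2 : c.r 2 < c.r 1 := c.rlt 1 2 le_rfl one_lt_two h2n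
    have hri2 : c.r i ≤ c.r 2 := c.rle 2 i one_le_two h2 hin
    have hripos : 0 < c.r i := c.rpos i (by omega) hin
    rw [div_mul_eq_mul_div, div_lt_iff₀ (by linarith)]
    nlinarith
  obtain ⟨Tp, hTpnn, hTp⟩ := diesOut_small _ hP1dies p hppos
  -- killer of the P i, i ≥ 2
  have hPkill : ∀ i, 2 ≤ i → i ≤ c.n →
      (∀ j, 2 ≤ j → j ≤ i → DiesOut (c.B j)) → DiesOut (c.P i) := by
    intro i h2 hin hBj
    have hi1 : 1 ≤ i := by omega
    have hsi : 0 < c.s i := c.spos i hi1 hin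
    have hs1i : c.s 1 ≤ c.s i := c.sle 1 i le_rfl hi1 hin
    have hRB : DiesOut (fun t => ∑ j ∈ Finset.Icc 2 i, c.B j t) := by
      apply diesOut_sum
      intro j hj; rw [Finset.mem_Icc] at hj; exact hBj j hj.1 hj.2
    obtain ⟨T2, hT2nn, hT2⟩ := diesOut_small _ hRB (ε/2) (by positivity)
    set T3 := max T0 T2 with hT3
    have hT3nn : (0:ℝ) ≤ T3 := le_trans hT0 (le_max_left _ _)
    apply diesOut_of_decay (c.P i) (c.gP i) T3 (ε/(2*c.s i)) (by positivity)
      (fun u hu => c.Pnn i hi1 hin u (le_trans hT3nn hu))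
      (fun u hu => c.dP i hi1 hin u (le_trans hT3nn hu))
    intro u hu
    show (c.s i)⁻¹ * (c.W i u - c.s i) ≤ -(ε/(2*c.s i))
    have hWu : c.W i u = c.B 1 u + ∑ j ∈ Finset.Icc 2 i, c.B j u := c.W_split i hi1 u
    have h1 : c.W i u - c.s i ≤ -(ε/2) := by
      rw [hWu]
      have ha := hsmall u (le_trans (le_max_left _ _) hu)
      have hb := hT2 u (le_trans (le_max_right _ _) hu)
      linarith
    calc (c.s i)⁻¹ * (c.W i u - c.s i) ≤ (c.s i)⁻¹ * (-(ε/2)) :=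
          mul_le_mul_of_nonneg_left h1 (by positivity)
      _ = -(ε/(2*c.s i)) := by field_simp [hsi.ne']
  have hext := c.extinction p Tp hTpnn hTp hthresh hPkill
  -- collection of smallness
  have hRdies : DiesOut (fun t => ∑ j ∈ Finset.Icc 2 c.n, (c.B j t + c.s j * c.P j t)) := by
    apply diesOut_sum
    intro j hj; rw [Finset.mem_Icc] at hj
    have h1 := (hext j hj.1 hj.2).1
    have h2 := (hext j hj.1 hj.2).2
    have := h1.add (h2.const_mul (c.s j))
    simpa [DiesOut] using this
  have hPRdies : DiesOut (fun t => ∑ j ∈ Finset.Icc 2 c.n, c.P j t) := by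
    apply diesOut_sum
    intro j hj; rw [Finset.mem_Icc] at hj
    exact (hext j hj.1 hj.2).2
  set δ0 := c.r 1 - 1 - c.r 1 * c.s 1 with hδ0
  have hδ0pos : 0 < δ0 := by have := c.hkey; rw [hδ0]; linarith
  have hden : (0:ℝ) < c.r 1 * c.s 1 + c.r 1 + 2 := by positivity
  set e1 := δ0 / (2 * (c.r 1 * c.s 1 + c.r 1 + 2)) with he1
  have he1pos : 0 < e1 := div_pos hδ0pos (by linarith)
  have he1eq : e1 * (2 * (c.r 1 * c.s 1 + c.r 1 + 2)) = δ0 := by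
    rw [he1]; field_simp
  obtain ⟨T4, hT4nn, hT4⟩ := diesOut_small _ hRdies e1 he1pos
  obtain ⟨T5, hT5nn, hT5⟩ := diesOut_small _ hPRdies e1 he1pos
  obtain ⟨T6, hT6nn, hT6⟩ := diesOut_small _ hP1dies e1 he1pos
  set T7 := max (max T0 T4) (max T5 T6) with hT7
  have hT7nn : (0:ℝ) ≤ T7 := le_trans hT0 (le_trans (le_max_left _ _) (le_max_left _ _))
  apply lv_growth_contra (fun u => Real.log (c.B 1 u)) (c.gB 1) T7 (δ0/2) 0 (by positivity)
    (fun u hu => c.dlogB 1 le_rfl c.hn c.hB10 u (le_trans hT7nn hu))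
  · intro u hu
    have hu0 : (0:ℝ) ≤ u := le_trans hT7nn hu
    rw [c.gB_eq 1 le_rfl c.hn u]
    have hSBs := c.SB_split u
    have hPSs := c.PS1_split2 u
    have h1 := hsmall u (le_trans (le_trans (le_max_left _ _) (le_max_left _ _)) hu)
    have h2 := hT4 u (le_trans (le_trans (le_max_right _ _) (le_max_left _ _)) hu)
    have h3 := hT5 u (le_trans (le_trans (le_max_left _ _) (le_max_right _ _)) hu)
    have h4 := hT6 u (le_trans (le_trans (le_max_right _ _) (le_max_right _ _)) hu)
    have hP1nn := c.Pnn 1 le_rfl c.hn u hu0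
    have hB1nn := c.Bnn 1 le_rfl c.hn u hu0
    nlinarith [mul_pos hr1 hε, mul_le_mul_of_nonneg_left h4 hs1.le]
  · intro u hu
    have hu0 : (0:ℝ) ≤ u := le_trans hT7nn hu
    exact Real.log_nonpos (c.Bnn 1 le_rfl c.hn u hu0) (c.Ble1 1 le_rfl c.hn u hu0)

lemma claimB (hP10 : 0 < c.P 1 0) (p Tp : ℝ) (hTpnn : 0 ≤ Tp) (hp : 0 ≤ p)
    (hpstar : p * (c.r 1 * c.s 1 + 1) < c.r 1 - 1 - c.r 1 * c.s 1)
    (hthresh : ∀ i, 2 ≤ i → i ≤ c.n → p * c.r i < c.r 1 - c.r i)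
    (hP1p : ∀ t, Tp ≤ t → c.P 1 t ≤ p) : False := by
  have hr1 : 0 < c.r 1 := c.rpos 1 le_rfl c.hn
  have hs1 := c.hs1
  have hP1pos : ∀ u : ℝ, 0 ≤ u → 0 < c.P 1 u := c.posP 1 le_rfl c.hn hP10
  have hlogP1ub : ∀ u : ℝ, 0 ≤ u → Real.log (c.P 1 u) ≤ Real.log (1/c.s 1) := by
    intro u hu0
    exact (Real.log_le_log_iff (hP1pos u hu0) (by positivity)).2 (c.Ple 1 le_rfl c.hn u hu0)
  -- killer for claim B : via the combo s_i log P_i - s_1 log P_1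
  have hPkill : ∀ i, 2 ≤ i → i ≤ c.n →
      (∀ j, 2 ≤ j → j ≤ i → DiesOut (c.B j)) → DiesOut (c.P i) := by
    intro i h2 hin hBj
    have hi1 : 1 ≤ i := by omega
    have hsi : 0 < c.s i := c.spos i hi1 hin
    by_cases h0 : c.P i 0 = 0
    · exact diesOut_of_eventually_zero _ 0 (c.zeroP i hi1 hin h0)
    have h0' : 0 < c.P i 0 := lt_of_le_of_ne (c.Pnn i hi1 hin 0 le_rfl) (Ne.symm h0)
    have hPipos : ∀ u : ℝ, 0 ≤ u → 0 < c.P i u := c.posP i hi1 hin h0'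
    have hs1i : c.s 1 < c.s i := c.slt 1 i le_rfl (by omega) hin
    set cM := (c.s i - c.s 1)/2 with hcM
    have hcMpos : 0 < cM := by rw [hcM]; linarith
    have hRB : DiesOut (fun t => ∑ j ∈ Finset.Icc 2 i, c.B j t) := by
      apply diesOut_sum
      intro j hj; rw [Finset.mem_Icc] at hj; exact hBj j hj.1 hj.2
    obtain ⟨T2, hT2nn, hT2⟩ := diesOut_small _ hRB cM hcMpos
    set M := fun u : ℝ => c.s i * Real.log (c.P i u) - c.s 1 * Real.log (c.P 1 u) with hM
    have hderM : ∀ u, T2 ≤ u →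
        HasDerivAt M (c.s i * c.gP i u - c.s 1 * c.gP 1 u) u := by
      intro u hu
      have hu0 : (0:ℝ) ≤ u := le_trans hT2nn hu
      exact ((c.dlogP i hi1 hin h0' u hu0).const_mul (c.s i)).sub
        ((c.dlogP 1 le_rfl c.hn hP10 u hu0).const_mul (c.s 1))
    have hbound : ∀ u, T2 ≤ u → c.s i * c.gP i u - c.s 1 * c.gP 1 u ≤ -cM := by
      intro u hu
      have hu0 : (0:ℝ) ≤ u := le_trans hT2nn hu
      have e1 : c.s i * c.gP i u = c.W i u - c.s i := by
        show c.s i * ((c.s i)⁻¹ * (c.W i u - c.s i)) = _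
        field_simp
      have e2 : c.s 1 * c.gP 1 u = c.W 1 u - c.s 1 := by
        show c.s 1 * ((c.s 1)⁻¹ * (c.W 1 u - c.s 1)) = _
        field_simp
      rw [e1, e2, c.W_split i hi1 u, c.W1_eq u]
      have := hT2 u hu
      have : ∑ j ∈ Finset.Icc 2 i, c.B j u ≤ cM := hT2 u hu
      rw [hcM] at *
      linarith
    have haff := lv_affine_le M _ T2 (-cM) hderM hbound
    set C := (M T2 + cM * T2 + c.s 1 * Real.log (1/c.s 1)) / c.s i with hC
    set cc := cM / c.s i with hcc
    have hccpos : 0 < cc := by positivity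
    clear_value cc C cM M
    apply diesOut_of_exp' (c.P i) T2 C cc hccpos
      (fun u hu => c.Pnn i hi1 hin u (le_trans hT2nn hu))
    intro u hu
    have hu0 : (0:ℝ) ≤ u := le_trans hT2nn hu
    have h5 := haff u hu
    have h6 : c.s i * Real.log (c.P i u)
        = M u + c.s 1 * Real.log (c.P 1 u) := by rw [hM]; ring
    have h7 : c.s 1 * Real.log (c.P 1 u) ≤ c.s 1 * Real.log (1/c.s 1) :=
      mul_le_mul_of_nonneg_left (hlogP1ub u hu0) hs1.le
    have h8 : c.s i * Real.log (c.P i u)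
        ≤ M T2 + cM * T2 + c.s 1 * Real.log (1/c.s 1) - cM * u := by
      rw [h6]
      have h5' : M u ≤ M T2 - cM * u + cM * T2 := by nlinarith [h5]
      linarith [h5', h7]
    have hCeq : C * c.s i = M T2 + cM * T2 + c.s 1 * Real.log (1/c.s 1) := by
      rw [hC]; field_simp
    have hcceq : cc * c.s i = cM := by rw [hcc]; field_simp
    have h9 : Real.log (c.P i u) ≤ C - cc * u := by nlinarith
    calc c.P i u = Real.exp (Real.log (c.P i u)) := (Real.exp_log (hPipos u hu0)).symm
      _ ≤ Real.exp (C - cc * u) := Real.exp_le_exp.2 h9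
  have hext := c.extinction p Tp hTpnn hP1p hthresh hPkill
  have hRdies : DiesOut (fun t => ∑ j ∈ Finset.Icc 2 c.n, (c.B j t + c.s j * c.P j t)) := by
    apply diesOut_sum
    intro j hj; rw [Finset.mem_Icc] at hj
    have h1 := (hext j hj.1 hj.2).1
    have h2 := (hext j hj.1 hj.2).2
    have := h1.add (h2.const_mul (c.s j))
    simpa [DiesOut] using this
  have hPRdies : DiesOut (fun t => ∑ j ∈ Finset.Icc 2 c.n, c.P j t) := by
    apply diesOut_sum
    intro j hj; rw [Finset.mem_Icc] at hj
    exact (hext j hj.1 hj.2).2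
  set δs := c.r 1 - 1 - c.r 1 * c.s 1 - p * (c.r 1 * c.s 1 + 1) with hδs
  have hδspos : 0 < δs := by rw [hδs]; linarith
  set η := δs / (4 * c.r 1) with hη
  have hηpos : 0 < η := by positivity
  have hηeq : η * (4 * c.r 1) = δs := by rw [hη]; field_simp
  set e1 := δs / (4 * (c.r 1 + 2)) with he1
  have he1pos : 0 < e1 := by positivity
  have he1eq : e1 * (4 * (c.r 1 + 2)) = δs := by rw [he1]; field_simp
  obtain ⟨T4, hT4nn, hT4⟩ := diesOut_small _ hRdies e1 he1pos
  obtain ⟨T5, hT5nn, hT5⟩ := diesOut_small _ hPRdies e1 he1pos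
  set T6 := max (max Tp T4) T5 with hT6
  have hT6nn : (0:ℝ) ≤ T6 := le_trans hTpnn (le_trans (le_max_left _ _) (le_max_left _ _))
  have hgB1 : ∀ u, T6 ≤ u → c.B 1 u ≤ c.s 1 + η → δs/2 ≤ c.gB 1 u := by
    intro u hu hB1u
    have hu0 : (0:ℝ) ≤ u := le_trans hT6nn hu
    rw [c.gB_eq 1 le_rfl c.hn u]
    have hSBs := c.SB_split u
    have hPSs := c.PS1_split2 u
    have h1 := hP1p u (le_trans (le_trans (le_max_left _ _) (le_max_left _ _)) hu)
    have h2 := hT4 u (le_trans (le_trans (le_max_right _ _) (le_max_left _ _)) hu)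
    have h3 := hT5 u (le_trans (le_max_right _ _) hu)
    have hP1nn := c.Pnn 1 le_rfl c.hn u hu0
    have hB1nn := c.Bnn 1 le_rfl c.hn u hu0
    nlinarith [mul_le_mul_of_nonneg_left h1 hs1.le, mul_le_mul_of_nonneg_left hB1u hr1.le]
  by_cases hcase : ∃ t0, T6 ≤ t0 ∧ c.s 1 + η ≤ c.B 1 t0
  · obtain ⟨t0, ht0, hB1t0⟩ := hcase
    have ht00 : (0:ℝ) ≤ t0 := le_trans hT6nn ht0
    have htrap := lv_trap (c.B 1) (fun u => c.B 1 u * c.gB 1 u) t0 (c.s 1 + η)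
      (fun u hu => c.dB 1 le_rfl c.hn u (le_trans ht00 hu))
      (fun u hu hle => mul_pos (c.posB 1 le_rfl c.hn c.hB10 u (le_trans ht00 hu))
        (lt_of_lt_of_le (by positivity) (hgB1 u (le_trans ht0 hu) hle)))
    have hB1ge : ∀ u, t0 ≤ u → c.s 1 + η ≤ c.B 1 u := by
      intro u hu
      have := htrap u hu
      have hminge : c.s 1 + η ≤ min (c.B 1 t0) (c.s 1 + η) := le_min hB1t0 le_rfl
      linarith
    apply lv_growth_contra (fun u => Real.log (c.P 1 u)) (c.gP 1) t0 (η/c.s 1)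
      (Real.log (1/c.s 1)) (by positivity)
      (fun u hu => c.dlogP 1 le_rfl c.hn hP10 u (le_trans ht00 hu))
    · intro u hu
      show η / c.s 1 ≤ (c.s 1)⁻¹ * (c.W 1 u - c.s 1)
      rw [c.W1_eq u]
      have := hB1ge u hu
      calc η / c.s 1 = (c.s 1)⁻¹ * η := by rw [div_eq_mul_inv]; ring
        _ ≤ (c.s 1)⁻¹ * (c.B 1 u - c.s 1) :=
            mul_le_mul_of_nonneg_left (by linarith) (by positivity)
    · intro u hu
      exact hlogP1ub u (le_trans ht00 hu)
  · push_neg at hcase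
    apply lv_growth_contra (fun u => Real.log (c.B 1 u)) (c.gB 1) T6 (δs/2) 0 (by positivity)
      (fun u hu => c.dlogB 1 le_rfl c.hn c.hB10 u (le_trans hT6nn hu))
      (fun u hu => hgB1 u hu (le_of_lt (hcase u hu)))
    intro u hu
    have hu0 : (0:ℝ) ≤ u := le_trans hT6nn hu
    exact Real.log_nonpos (c.Bnn 1 le_rfl c.hn u hu0) (c.Ble1 1 le_rfl c.hn u hu0)

end LVCtx
theorem stmt16
    (n : ℕ) (hn : 1 ≤ n) (r s : ℕ → ℝ)
    (hr : ∀ i, 1 ≤ i → i < n → r (i + 1) < r i) (hrn : 1 < r n)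
    (hs1 : 0 < s 1) (hs : ∀ i, 1 ≤ i → i < n → s i < s (i + 1))
    (hss : 1 < r n / (1 + lvQ r s n))
    (B P : ℕ → ℝ → ℝ) (hsol : IsSolutionLV n r s B P)
    (hB10 : 0 < B 1 0) :
    s 1 ≤ limsup (B 1) atTop ∧
    (0 < P 1 0 →
      (1 < n →
        min ((r 1 - r 2) / (1 + r 1)) ((r 1 - 1 - r 1 * s 1) / (r 1 * s 1 + 1)) ≤
          limsup (P 1) atTop) ∧
      (n = 1 → (r 1 - 1 - r 1 * s 1) / (r 1 * s 1 + 1) ≤ limsup (P 1) atTop)) := by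
  -- monotonicity facts needed before building the context
  have hrmono : ∀ i, 1 ≤ i → i ≤ n → r i ≤ r 1 := by
    intro i h1
    induction i, h1 using Nat.le_induction with
    | base => intro _; exact le_rfl
    | succ k hk ih =>
        intro h2
        exact le_trans (hr k hk (by omega)).le (ih (by omega))
  have hsmono : ∀ i, 1 ≤ i → i ≤ n → s 1 ≤ s i := by
    intro i h1
    induction i, h1 using Nat.le_induction with
    | base => intro _; exact le_rfl
    | succ k hk ih =>
        intro h2
        exact le_trans (ih (by omega)) (hs k hk (by omega)).le
  have hr1n : r n ≤ r 1 := hrmono n hn le_rfl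
  have hr1pos : (0:ℝ) < r 1 := by linarith
  -- telescoping
  have tele : ∀ m : ℕ, (∑ i ∈ Finset.Icc 1 m, (r i - r (i+1))) = r 1 - r (m+1) := by
    intro m
    induction m with
    | zero => simp
    | succ k ih =>
        rw [Finset.sum_Icc_succ_top (by omega : 1 ≤ k+1), ih]
        ring
  have htele : (∑ i ∈ Finset.Icc 1 (n-1), (r i - r (i+1))) = r 1 - r n := by
    have := tele (n-1)
    rwa [show n - 1 + 1 = n by omega] at this
  have hQge : s 1 * r 1 ≤ lvQ r s n := by
    have hterm : ∀ i ∈ Finset.Icc 1 (n-1),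
        s 1 * (r i - r (i+1)) ≤ s i * (r i - r (i+1)) := by
      intro i hi
      rw [Finset.mem_Icc] at hi
      have h1 : r (i+1) < r i := hr i hi.1 (by omega)
      have h2 : s 1 ≤ s i := hsmono i hi.1 (by omega)
      nlinarith
    have hsum := Finset.sum_le_sum hterm
    rw [← Finset.mul_sum, htele] at hsum
    have hsn : s 1 ≤ s n := hsmono n hn le_rfl
    have hrnpos : (0:ℝ) < r n := by linarith
    have : s 1 * r n ≤ s n * r n := mul_le_mul_of_nonneg_right hsn hrnpos.le
    unfold lvQ
    nlinarith
  have hQ1pos : (0:ℝ) < 1 + lvQ r s n := by nlinarith [mul_pos hs1 hr1pos]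
  have hQlt : 1 + lvQ r s n < r n := by
    have := (one_lt_div hQ1pos).1 hss
    linarith
  have hkey : 1 + s 1 * r 1 < r 1 := by linarith
  -- the context
  set c : LVCtx := ⟨n, r, s, B, P, hn, hr, hrn, hs1, hs, hkey, hsol, hB10⟩ with hc
  have hnum : (0:ℝ) < r 1 - 1 - r 1 * s 1 := by nlinarith
  have hden : (0:ℝ) < r 1 * s 1 + 1 := by nlinarith [mul_pos hr1pos hs1]
  constructor
  · -- limsup B1 ≥ s1
    by_contra hcon
    push_neg at hcon
    have hbdd : IsBoundedUnder (· ≤ ·) atTop (B 1) :=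
      Filter.isBoundedUnder_of_eventually_le (a := 1)
        (eventually_atTop.2 ⟨0, fun t ht => c.Ble1 1 le_rfl c.hn t ht⟩)
    have hb : limsup (B 1) atTop < (limsup (B 1) atTop + s 1)/2 := by linarith
    have hev := eventually_lt_of_limsup_lt hb hbdd
    rw [eventually_atTop] at hev
    obtain ⟨T0', hT0'⟩ := hev
    exact c.claimA ((s 1 - limsup (B 1) atTop)/2) (max T0' 0) (by linarith)
      (le_max_right _ _)
      (fun t ht => by
        have := hT0' t (le_trans (le_max_left _ _) ht)
        show B 1 t ≤ s 1 - (s 1 - limsup (B 1) atTop)/2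
        linarith)
  · intro hP10
    have hbddP : IsBoundedUnder (· ≤ ·) atTop (P 1) :=
      Filter.isBoundedUnder_of_eventually_le (a := 1 / s 1)
        (eventually_atTop.2 ⟨0, fun t ht => c.Ple 1 le_rfl c.hn t ht⟩)
    constructor
    · -- n > 1
      intro hn2
      by_contra hcon
      push_neg at hcon
      set L := limsup (P 1) atTop with hL
      set m := min ((r 1 - r 2) / (1 + r 1)) ((r 1 - 1 - r 1 * s 1) / (r 1 * s 1 + 1)) with hm
      have hr2 : r 2 < r 1 := hr 1 le_rfl (by omega)
      have hmpos : 0 < m := by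
        apply lt_min
        · apply div_pos (by linarith) (by linarith)
        · exact div_pos hnum hden
      set p := max ((L + m)/2) 0 with hp_def
      have hpm : p < m := max_lt (by linarith) hmpos
      have hp0 : 0 ≤ p := le_max_right _ _
      have hppstar : p * (r 1 * s 1 + 1) < r 1 - 1 - r 1 * s 1 := by
        have h1 : p < (r 1 - 1 - r 1 * s 1) / (r 1 * s 1 + 1) :=
          lt_of_lt_of_le hpm (min_le_right _ _)
        exact (lt_div_iff₀ hden).1 h1
      have hthresh : ∀ i, 2 ≤ i → i ≤ n → p * r i < r 1 - r i := by
        intro i h2 hin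
        have hri2 : r i ≤ r 2 := c.rle 2 i one_le_two h2 hin
        have hripos : (0:ℝ) < r i := by
          have := c.rgt1 i (by omega) hin; linarith
        have h1 : p < (r 1 - r 2) / (1 + r 1) := lt_of_lt_of_le hpm (min_le_left _ _)
        have h2' : p * (1 + r 1) < r 1 - r 2 := (lt_div_iff₀ (by linarith)).1 h1
        have h3 : p * r i ≤ p * (1 + r 1) := by
          apply mul_le_mul_of_nonneg_left _ hp0
          have := hrmono i (by omega) hin
          linarith
        linarith
      have hb : L < (L + m)/2 := by linarith
      have hev := eventually_lt_of_limsup_lt hb hbddP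
      rw [eventually_atTop] at hev
      obtain ⟨T0', hT0'⟩ := hev
      exact c.claimB hP10 p (max T0' 0) (le_max_right _ _) hp0 hppstar hthresh
        (fun t ht => by
          have := hT0' t (le_trans (le_max_left _ _) ht)
          show P 1 t ≤ p
          have : P 1 t < (L + m)/2 := this
          have h4 : (L + m)/2 ≤ p := le_max_left _ _
          linarith)
    · -- n = 1
      intro hn1
      by_contra hcon
      push_neg at hcon
      set L := limsup (P 1) atTop with hL
      set m := (r 1 - 1 - r 1 * s 1) / (r 1 * s 1 + 1) with hm
      have hmpos : 0 < m := div_pos hnum hden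
      set p := max ((L + m)/2) 0 with hp_def
      have hpm : p < m := max_lt (by linarith) hmpos
      have hp0 : 0 ≤ p := le_max_right _ _
      have hppstar : p * (r 1 * s 1 + 1) < r 1 - 1 - r 1 * s 1 :=
        (lt_div_iff₀ hden).1 hpm
      have hthresh : ∀ i, 2 ≤ i → i ≤ n → p * r i < r 1 - r i := by
        intro i h2 hin; omega
      have hb : L < (L + m)/2 := by linarith
      have hev := eventually_lt_of_limsup_lt hb hbddP
      rw [eventually_atTop] at hev
      obtain ⟨T0', hT0'⟩ := hev
      exact c.claimB hP10 p (max T0' 0) (le_max_right _ _) hp0 hppstar hthresh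
        (fun t ht => by
          have := hT0' t (le_trans (le_max_left _ _) ht)
          show P 1 t ≤ p
          have : P 1 t < (L + m)/2 := this
          have h4 : (L + m)/2 ≤ p := le_max_left _ _
          linarith)
end

section
/- (Time-average lemma for Lotka–Volterra systems.) Consider the Lotka–Volterra system x_i' = x_i(ρ_i + Σ_{j=1}^n a_{ij} x_j), 1 ≤ i ≤ n, with real parameters ρ_i and matrix A = (a_{ij}). Suppose k < n, the k×k submatrix Â = (a_{ij})_{1≤i,j≤k} is invertible, and p = (p_1,…,p_k) with all p_i > 0 is the unique solution of ρ_i + Σ_{j=1}^k a_{ij} p_j = 0 (1 ≤ i ≤ k). Then there exists a constant c > 0, depending only on A and k, with the following property: for every bounded differentiable solution x : [0,∞) → ℝ^n with all components positive, and every m, M, δ > 0 such that m ≤ x_i(t) ≤ M for all 1 ≤ i ≤ k and t > 0, x_{k+1}(t) ≤ δ for all t > 0, and x_j(t) → 0 as t → ∞ for all j > k+1, one has limsup_{T→∞} |(1/T)∫_0^T x_i(t) dt − p_i| ≤ c·δ for each 1 ≤ i ≤ k. -/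
open Filter

lemma LV_intInt {f : ℝ → ℝ} (hc : ∀ t : ℝ, 0 ≤ t → ContinuousAt f t)
    {A B : ℝ} (hA : 0 ≤ A) (hB : 0 ≤ B) : IntervalIntegrable f MeasureTheory.volume A B := by
  apply ContinuousOn.intervalIntegrable
  intro t ht
  exact (hc t (le_trans (le_min hA hB) ht.1)).continuousWithinAt

lemma LV_cesaro {f : ℝ → ℝ} (hc : ∀ t : ℝ, 0 ≤ t → ContinuousAt f t)
    (hnn : ∀ t : ℝ, 0 ≤ t → 0 ≤ f t) (hlim : Tendsto f atTop (nhds 0)) :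
    Tendsto (fun T : ℝ => (1 / T) * ∫ t in (0:ℝ)..T, f t) atTop (nhds 0) := by
  rw [Metric.tendsto_atTop]
  intro ε hε
  obtain ⟨T₀, hT₀⟩ := (Metric.tendsto_atTop.1 hlim) (ε / 2) (by linarith)
  set T₁ : ℝ := max T₀ 1 with hT₁def
  have hT₁pos : (0:ℝ) < T₁ := lt_of_lt_of_le one_pos (le_max_right _ _)
  set C : ℝ := ∫ t in (0:ℝ)..T₁, f t with hC
  have hCnn : 0 ≤ C := by
    rw [hC, intervalIntegral.integral_of_le hT₁pos.le]
    apply MeasureTheory.setIntegral_nonneg measurableSet_Ioc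
    intro t ht; exact hnn t ht.1.le
  refine ⟨max T₁ (2 * (C + 1) / ε), fun T hT => ?_⟩
  have hTT₁ : T₁ ≤ T := le_trans (le_max_left _ _) hT
  have hTpos : 0 < T := lt_of_lt_of_le hT₁pos hTT₁
  have hint1 : IntervalIntegrable f MeasureTheory.volume 0 T₁ := LV_intInt hc le_rfl hT₁pos.le
  have hint2 : IntervalIntegrable f MeasureTheory.volume T₁ T := by
    apply ContinuousOn.intervalIntegrable
    intro t ht
    exact (hc t (le_trans (le_min hT₁pos.le (hT₁pos.le.trans hTT₁)) ht.1)).continuousWithinAt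
  have hsplit : (∫ t in (0:ℝ)..T, f t) = C + ∫ t in T₁..T, f t := by
    rw [hC, intervalIntegral.integral_add_adjacent_intervals hint1 hint2]
  have htail : (∫ t in T₁..T, f t) ≤ ε / 2 * T := by
    rw [intervalIntegral.integral_of_le hTT₁]
    calc (∫ t in Set.Ioc T₁ T, f t) ≤ ∫ _ in Set.Ioc T₁ T, (ε/2) := by
            apply MeasureTheory.setIntegral_mono_on
            · exact (intervalIntegrable_iff_integrableOn_Ioc_of_le hTT₁).1 hint2
            · exact MeasureTheory.integrableOn_const measure_Ioc_lt_top.ne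
            · exact measurableSet_Ioc
            · intro t ht
              have := hT₀ t (le_trans (le_max_left _ _) ht.1.le)
              rw [Real.dist_eq, sub_zero] at this
              exact le_of_lt (lt_of_abs_lt this)
      _ ≤ ε / 2 * T := by
            rw [MeasureTheory.setIntegral_const]
            simp only [Real.volume_Ioc, smul_eq_mul]
            rw [Real.volume_real_Ioc_of_le hTT₁]
            have : T - T₁ ≤ T := by linarith
            nlinarith [hε.le]
  have hub : (1 / T) * ∫ t in (0:ℝ)..T, f t ≤ C / T + ε / 2 := by
    have h1 : (∫ t in (0:ℝ)..T, f t) ≤ C + ε / 2 * T := by rw [hsplit]; linarith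
    calc (1 / T) * ∫ t in (0:ℝ)..T, f t ≤ (1 / T) * (C + ε / 2 * T) :=
          mul_le_mul_of_nonneg_left h1 (by positivity)
      _ = C / T + ε / 2 := by field_simp
  have hlb : 0 ≤ (1 / T) * ∫ t in (0:ℝ)..T, f t := by
    apply mul_nonneg (by positivity)
    rw [intervalIntegral.integral_of_le hTpos.le]
    apply MeasureTheory.setIntegral_nonneg measurableSet_Ioc
    intro t ht; exact hnn t ht.1.le
  have hCT : C / T < ε / 2 := by
    have h2 : 2 * (C + 1) / ε ≤ T := le_trans (le_max_right _ _) hT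
    rw [div_lt_iff₀ hTpos]
    have : 2 * (C+1) ≤ ε * T := by rw [div_le_iff₀ hε] at h2; linarith
    nlinarith
  rw [Real.dist_eq, sub_zero, abs_of_nonneg hlb]
  linarith

lemma LV_sum_Icc_fin (k : ℕ) (g : ℕ → ℝ) :
    ∑ j ∈ Finset.Icc 1 k, g j = ∑ j : Fin k, g (j.1 + 1) := by
  rw [Fin.sum_univ_eq_sum_range (fun j => g (j + 1)) k]
  rw [← Finset.Ico_add_one_right_eq_Icc, Finset.sum_Ico_eq_sum_range]
  simp [add_comm]

lemma LV_split {k n : ℕ} (hk : k < n) (F : ℕ → ℝ) :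
    ∑ j ∈ Finset.Icc 1 n, F j
      = (∑ j ∈ Finset.Icc 1 k, F j) + F (k+1) + ∑ j ∈ Finset.Icc (k+2) n, F j := by
  rw [show Finset.Icc 1 n = Finset.Ioc 0 n from Finset.Icc_add_one_left_eq_Ioc 0 n,
      show Finset.Icc 1 k = Finset.Ioc 0 k from Finset.Icc_add_one_left_eq_Ioc 0 k,
      show Finset.Icc (k+2) n = Finset.Ioc (k+1) n from Finset.Icc_add_one_left_eq_Ioc (k+1) n]
  rw [← Finset.sum_Ioc_consecutive F (Nat.zero_le k) hk.le,
      ← Finset.sum_Ioc_consecutive F (Nat.le_succ k) hk,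
      Nat.Ioc_succ_singleton, Finset.sum_singleton, add_assoc]

theorem stmt17
    (n k : ℕ) (hk1 : 1 ≤ k) (hkn : k < n)
    (ρ : ℕ → ℝ) (a : ℕ → ℕ → ℝ)
    (hdet : (Matrix.of fun i j : Fin k => a (i.1 + 1) (j.1 + 1)).det ≠ 0)
    (p : ℕ → ℝ)
    (hp_pos : ∀ i ∈ Finset.Icc 1 k, 0 < p i)
    (hp_eq : ∀ i ∈ Finset.Icc 1 k, ρ i + ∑ j ∈ Finset.Icc 1 k, a i j * p j = 0)
    (hp_uniq : ∀ q : ℕ → ℝ,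
      (∀ i ∈ Finset.Icc 1 k, ρ i + ∑ j ∈ Finset.Icc 1 k, a i j * q j = 0) →
      ∀ i ∈ Finset.Icc 1 k, q i = p i) :
    ∃ c : ℝ, 0 < c ∧
      ∀ x : ℕ → ℝ → ℝ,
        (∀ i ∈ Finset.Icc 1 n, ∀ t : ℝ, 0 ≤ t →
          HasDerivAt (x i) (x i t * (ρ i + ∑ j ∈ Finset.Icc 1 n, a i j * x j t)) t) →
        (∀ i ∈ Finset.Icc 1 n, ∀ t : ℝ, 0 ≤ t → 0 < x i t) →
        (∃ C : ℝ, ∀ i ∈ Finset.Icc 1 n, ∀ t : ℝ, 0 ≤ t → x i t ≤ C) →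
        ∀ m M δ : ℝ, 0 < m → 0 < M → 0 < δ →
        (∀ i ∈ Finset.Icc 1 k, ∀ t : ℝ, 0 < t → m ≤ x i t ∧ x i t ≤ M) →
        (∀ t : ℝ, 0 < t → x (k + 1) t ≤ δ) →
        (∀ j, k + 1 < j → j ≤ n → Tendsto (x j) atTop (nhds 0)) →
        ∀ i ∈ Finset.Icc 1 k,
          limsup (fun T => |(1 / T) * (∫ t in (0:ℝ)..T, x i t) - p i|) atTop ≤ c * δ := by
  classical
  set Ahat : Matrix (Fin k) (Fin k) ℝ := Matrix.of fun i j : Fin k => a (i.1 + 1) (j.1 + 1)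
    with hAhat
  set SB : ℝ := ∑ i : Fin k, ∑ j : Fin k, |Ahat⁻¹ i j| with hSBdef
  set mA : ℝ := ∑ j : Fin k, |a (j.1 + 1) (k + 1)| with hmAdef
  have hSBnn : 0 ≤ SB := Finset.sum_nonneg fun i _ => Finset.sum_nonneg fun j _ => abs_nonneg _
  have hmAnn : 0 ≤ mA := Finset.sum_nonneg fun j _ => abs_nonneg _
  refine ⟨SB * mA + 1, by nlinarith, ?_⟩
  intro x hderiv hpos _hbdd m M δ hm hM hδ hmM hδbd htail i hi
  have hcont : ∀ j ∈ Finset.Icc 1 n, ∀ t : ℝ, 0 ≤ t → ContinuousAt (x j) t :=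
    fun j hj t ht => (hderiv j hj t ht).continuousAt
  have hk1n : (k + 1) ∈ Finset.Icc 1 n := by rw [Finset.mem_Icc]; omega
  -- key integral identity
  have key : ∀ i' ∈ Finset.Icc 1 k, ∀ T : ℝ, 0 < T →
      ρ i' * T + ∑ j ∈ Finset.Icc 1 n, a i' j * (∫ t in (0:ℝ)..T, x j t)
        = Real.log (x i' T) - Real.log (x i' 0) := by
    intro i' hi' T hT
    have hi'n : i' ∈ Finset.Icc 1 n := by rw [Finset.mem_Icc] at hi' ⊢; omega
    have hSumCont : ∀ t : ℝ, 0 ≤ t →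
        ContinuousAt (fun s => ρ i' + ∑ j ∈ Finset.Icc 1 n, a i' j * x j s) t := by
      intro t ht
      exact continuousAt_const.add (tendsto_finset_sum _
        (fun j hj => continuousAt_const.mul (hcont j hj t ht)))
    have hlog : ∀ t ∈ Set.uIcc (0:ℝ) T,
        HasDerivAt (fun s => Real.log (x i' s))
          (ρ i' + ∑ j ∈ Finset.Icc 1 n, a i' j * x j t) t := by
      intro t ht
      rw [Set.uIcc_of_le hT.le] at ht
      have hxp := hpos i' hi'n t ht.1
      have h := (hderiv i' hi'n t ht.1).log hxp.ne'
      have h2 : x i' t * (ρ i' + ∑ j ∈ Finset.Icc 1 n, a i' j * x j t) / x i' t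
          = ρ i' + ∑ j ∈ Finset.Icc 1 n, a i' j * x j t := by
        rw [mul_comm, mul_div_assoc, div_self hxp.ne', mul_one]
      rwa [h2] at h
    have hint : IntervalIntegrable (fun t => ρ i' + ∑ j ∈ Finset.Icc 1 n, a i' j * x j t)
        MeasureTheory.volume 0 T := LV_intInt hSumCont le_rfl hT.le
    have hkey := intervalIntegral.integral_eq_sub_of_hasDerivAt hlog hint
    have hintsum : IntervalIntegrable (fun t => ∑ j ∈ Finset.Icc 1 n, a i' j * x j t)
        MeasureTheory.volume 0 T := by
      apply LV_intInt _ le_rfl hT.le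
      intro t ht
      exact tendsto_finset_sum _ (fun j hj => continuousAt_const.mul (hcont j hj t ht))
    rw [intervalIntegral.integral_add intervalIntegrable_const hintsum,
        intervalIntegral.integral_const,
        intervalIntegral.integral_finset_sum (fun j hj =>
            (LV_intInt (hcont j hj) le_rfl hT.le).const_mul (a i' j))] at hkey
    simp only [intervalIntegral.integral_const_mul, sub_zero, smul_eq_mul] at hkey
    rw [← hkey]; ring
  -- log-difference average tends to zero
  have heps : ∀ i' ∈ Finset.Icc 1 k,
      Tendsto (fun T => (Real.log (x i' T) - Real.log (x i' 0)) / T) atTop (nhds 0) := by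
    intro i' hi'
    apply squeeze_zero_norm'
      (a := fun T => (|Real.log m| + |Real.log M| + |Real.log (x i' 0)|) / T)
    · filter_upwards [eventually_gt_atTop 0] with T hT
      have hb := hmM i' hi' T hT
      have hxp : 0 < x i' T := lt_of_lt_of_le hm hb.1
      have h1 : Real.log m ≤ Real.log (x i' T) := Real.log_le_log hm hb.1
      have h2 : Real.log (x i' T) ≤ Real.log M := Real.log_le_log hxp hb.2
      rw [Real.norm_eq_abs, abs_div, abs_of_pos hT]
      gcongr
      have h3 : |Real.log (x i' T) - Real.log (x i' 0)|
          ≤ |Real.log (x i' T)| + |Real.log (x i' 0)| := abs_sub _ _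
      have h4 : |Real.log (x i' T)| ≤ |Real.log m| + |Real.log M| := by
        rw [abs_le]; constructor
        · linarith [neg_abs_le (Real.log m), abs_nonneg (Real.log M)]
        · linarith [le_abs_self (Real.log M), abs_nonneg (Real.log m)]
      linarith
    · exact Tendsto.div_atTop tendsto_const_nhds tendsto_id
  -- averages are nonnegative
  have havgnn : ∀ j ∈ Finset.Icc 1 n, ∀ T : ℝ, 0 < T →
      0 ≤ (1 / T) * ∫ t in (0:ℝ)..T, x j t := by
    intro j hj T hT
    apply mul_nonneg (by positivity)
    rw [intervalIntegral.integral_of_le hT.le]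
    apply MeasureTheory.setIntegral_nonneg measurableSet_Ioc
    intro t ht; exact (hpos j hj t ht.1.le).le
  -- average of x_{k+1} is at most δ
  have havgle : ∀ T : ℝ, 0 < T → (1 / T) * (∫ t in (0:ℝ)..T, x (k+1) t) ≤ δ := by
    intro T hT
    have hintb : (∫ t in (0:ℝ)..T, x (k+1) t) ≤ δ * T := by
      rw [intervalIntegral.integral_of_le hT.le]
      calc (∫ t in Set.Ioc (0:ℝ) T, x (k+1) t) ≤ ∫ _ in Set.Ioc (0:ℝ) T, δ := by
            apply MeasureTheory.setIntegral_mono_on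
            · exact (intervalIntegrable_iff_integrableOn_Ioc_of_le hT.le).1
                (LV_intInt (hcont _ hk1n) le_rfl hT.le)
            · exact MeasureTheory.integrableOn_const measure_Ioc_lt_top.ne
            · exact measurableSet_Ioc
            · intro t ht; exact hδbd t ht.1
        _ = δ * T := by
            rw [MeasureTheory.setIntegral_const]
            simp [Real.volume_Ioc, ENNReal.toReal_ofReal hT.le, mul_comm, hT.le]
    calc (1 / T) * (∫ t in (0:ℝ)..T, x (k+1) t) ≤ (1 / T) * (δ * T) :=
          mul_le_mul_of_nonneg_left hintb (by positivity)
      _ = δ := by field_simp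
  -- tail averages tend to zero
  have htavg : ∀ j ∈ Finset.Icc (k+2) n,
      Tendsto (fun T => (1 / T) * ∫ t in (0:ℝ)..T, x j t) atTop (nhds 0) := by
    intro j hj
    rw [Finset.mem_Icc] at hj
    have hjn : j ∈ Finset.Icc 1 n := by rw [Finset.mem_Icc]; omega
    exact LV_cesaro (hcont j hjn) (fun t ht => (hpos j hjn t ht).le)
      (htail j (by omega) hj.2)
  -- the matrix identity
  have hw : ∀ T : ℝ, 0 < T → ∀ i0 : Fin k,
      ((1 / T) * ∫ t in (0:ℝ)..T, x (i0.1 + 1) t) - p (i0.1 + 1)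
        = ∑ j : Fin k, Ahat⁻¹ i0 j *
            ((Real.log (x (j.1 + 1) T) - Real.log (x (j.1 + 1) 0)) / T
              - a (j.1 + 1) (k + 1) * ((1 / T) * ∫ t in (0:ℝ)..T, x (k+1) t)
              - ∑ j' ∈ Finset.Icc (k+2) n, a (j.1 + 1) j' * ((1 / T) * ∫ t in (0:ℝ)..T, x j' t)) := by
    intro T hT
    have hvec : Ahat.mulVec
        (fun j : Fin k => ((1 / T) * ∫ t in (0:ℝ)..T, x (j.1 + 1) t) - p (j.1 + 1))
        = (fun j : Fin k =>
            (Real.log (x (j.1 + 1) T) - Real.log (x (j.1 + 1) 0)) / T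
              - a (j.1 + 1) (k + 1) * ((1 / T) * ∫ t in (0:ℝ)..T, x (k+1) t)
              - ∑ j' ∈ Finset.Icc (k+2) n, a (j.1 + 1) j' * ((1 / T) * ∫ t in (0:ℝ)..T, x j' t)) := by
      funext i0
      have hi0k : (i0.1 + 1) ∈ Finset.Icc 1 k := by rw [Finset.mem_Icc]; omega
      have hkeyT := key (i0.1 + 1) hi0k T hT
      have hρ := hp_eq (i0.1 + 1) hi0k
      simp only [Matrix.mulVec, dotProduct, hAhat, Matrix.of_apply]
      have e0 : ∑ j : Fin k, a (i0.1 + 1) (j.1 + 1) *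
            (((1 / T) * ∫ t in (0:ℝ)..T, x (j.1 + 1) t) - p (j.1 + 1))
          = (∑ j ∈ Finset.Icc 1 k, a (i0.1 + 1) j * ((1 / T) * ∫ t in (0:ℝ)..T, x j t))
            - ∑ j ∈ Finset.Icc 1 k, a (i0.1 + 1) j * p j := by
        rw [LV_sum_Icc_fin k (fun j => a (i0.1 + 1) j * ((1 / T) * ∫ t in (0:ℝ)..T, x j t)),
            LV_sum_Icc_fin k (fun j => a (i0.1 + 1) j * p j), ← Finset.sum_sub_distrib]
        exact Finset.sum_congr rfl (fun j _ => by ring)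
      have esplit := LV_split hkn (fun j => a (i0.1 + 1) j * ((1 / T) * ∫ t in (0:ℝ)..T, x j t))
      have eavg : ∑ j ∈ Finset.Icc 1 n, a (i0.1 + 1) j * ((1 / T) * ∫ t in (0:ℝ)..T, x j t)
          = (Real.log (x (i0.1 + 1) T) - Real.log (x (i0.1 + 1) 0)) / T - ρ (i0.1 + 1) := by
        have h1 : ∑ j ∈ Finset.Icc 1 n, a (i0.1 + 1) j * ((1 / T) * ∫ t in (0:ℝ)..T, x j t)
            = (1 / T) * ∑ j ∈ Finset.Icc 1 n, a (i0.1 + 1) j * ∫ t in (0:ℝ)..T, x j t := by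
          rw [Finset.mul_sum]
          exact Finset.sum_congr rfl (fun j _ => by ring)
        have h2 : ∑ j ∈ Finset.Icc 1 n, a (i0.1 + 1) j * ∫ t in (0:ℝ)..T, x j t
            = (Real.log (x (i0.1 + 1) T) - Real.log (x (i0.1 + 1) 0)) - ρ (i0.1 + 1) * T := by
          linarith [hkeyT]
        rw [h1, h2]
        field_simp
      rw [e0]
      linarith [esplit, eavg, hρ]
    have hinv := congrArg (fun v => Ahat⁻¹.mulVec v) hvec
    simp only [Matrix.mulVec_mulVec] at hinv
    rw [Matrix.nonsing_inv_mul Ahat (isUnit_iff_ne_zero.2 hdet), Matrix.one_mulVec] at hinv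
    intro i0
    have := congrFun hinv i0
    simpa [Matrix.mulVec, dotProduct] using this
  -- finish with limsup estimates
  rw [Finset.mem_Icc] at hi
  have hi0lt : i - 1 < k := by omega
  have hi0 : (⟨i - 1, hi0lt⟩ : Fin k).1 + 1 = i := by simp; omega
  set i0 : Fin k := ⟨i - 1, hi0lt⟩ with hi0def
  set g : ℝ → ℝ := fun T => ∑ j : Fin k, |Ahat⁻¹ i0 j| *
      (|(Real.log (x (j.1 + 1) T) - Real.log (x (j.1 + 1) 0)) / T|
        + |a (j.1 + 1) (k + 1)| * δ
        + ∑ j' ∈ Finset.Icc (k+2) n, |a (j.1 + 1) j'| * |(1 / T) * ∫ t in (0:ℝ)..T, x j' t|)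
    with hgdef
  set S : ℝ := ∑ j : Fin k, |Ahat⁻¹ i0 j| * (|a (j.1 + 1) (k + 1)| * δ) with hSdef
  have hgS : Tendsto g atTop (nhds S) := by
    rw [hgdef, hSdef]
    apply tendsto_finset_sum
    intro j _
    have hjk : (j.1 + 1) ∈ Finset.Icc 1 k := by rw [Finset.mem_Icc]; omega
    have h1 : Tendsto
        (fun T => |(Real.log (x (j.1 + 1) T) - Real.log (x (j.1 + 1) 0)) / T|)
        atTop (nhds 0) := by
      have := (heps _ hjk).abs; simpa using this
    have h2 : Tendsto (fun T => ∑ j' ∈ Finset.Icc (k+2) n,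
        |a (j.1 + 1) j'| * |(1 / T) * ∫ t in (0:ℝ)..T, x j' t|) atTop (nhds 0) := by
      have h3 : Tendsto (fun T => ∑ j' ∈ Finset.Icc (k+2) n,
          |a (j.1 + 1) j'| * |(1 / T) * ∫ t in (0:ℝ)..T, x j' t|) atTop
          (nhds (∑ j' ∈ Finset.Icc (k+2) n, (0:ℝ))) := by
        apply tendsto_finset_sum
        intro j' hj'
        have := ((htavg j' hj').abs).const_mul |a (j.1 + 1) j'|
        simpa using this
      simpa using h3
    have hc2 : Tendsto (fun _ : ℝ => |a (j.1 + 1) (k + 1)| * δ) atTop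
        (nhds (|a (j.1 + 1) (k + 1)| * δ)) := tendsto_const_nhds
    have := ((h1.add hc2).add h2).const_mul |Ahat⁻¹ i0 j|
    simpa using this
  have hfg : ∀ᶠ T in atTop, |(1 / T) * (∫ t in (0:ℝ)..T, x i t) - p i| ≤ g T := by
    filter_upwards [eventually_gt_atTop 0] with T hT
    have hwT := hw T hT i0
    rw [hgdef]
    rw [← hi0]
    rw [hwT]
    calc |∑ j : Fin k, Ahat⁻¹ i0 j * _| ≤ ∑ j : Fin k, |Ahat⁻¹ i0 j * _| :=
          Finset.abs_sum_le_sum_abs _ _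
      _ ≤ _ := by
          apply Finset.sum_le_sum
          intro j _
          rw [abs_mul]
          apply mul_le_mul_of_nonneg_left _ (abs_nonneg _)
          have b1 : |a (j.1 + 1) (k + 1) * ((1 / T) * ∫ t in (0:ℝ)..T, x (k+1) t)|
              ≤ |a (j.1 + 1) (k + 1)| * δ := by
            rw [abs_mul]
            apply mul_le_mul_of_nonneg_left _ (abs_nonneg _)
            rw [abs_of_nonneg (havgnn (k+1) hk1n T hT)]
            exact havgle T hT
          have b2 : |∑ j' ∈ Finset.Icc (k+2) n,
                a (j.1 + 1) j' * ((1 / T) * ∫ t in (0:ℝ)..T, x j' t)|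
              ≤ ∑ j' ∈ Finset.Icc (k+2) n,
                |a (j.1 + 1) j'| * |(1 / T) * ∫ t in (0:ℝ)..T, x j' t| := by
            refine le_trans (Finset.abs_sum_le_sum_abs _ _) ?_
            apply Finset.sum_le_sum
            intro j' _
            rw [abs_mul]
          have b3 := abs_sub
            ((Real.log (x (j.1 + 1) T) - Real.log (x (j.1 + 1) 0)) / T
              - a (j.1 + 1) (k + 1) * ((1 / T) * ∫ t in (0:ℝ)..T, x (k+1) t))
            (∑ j' ∈ Finset.Icc (k+2) n, a (j.1 + 1) j' * ((1 / T) * ∫ t in (0:ℝ)..T, x j' t))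
          have b4 := abs_sub
            ((Real.log (x (j.1 + 1) T) - Real.log (x (j.1 + 1) 0)) / T)
            (a (j.1 + 1) (k + 1) * ((1 / T) * ∫ t in (0:ℝ)..T, x (k+1) t))
          linarith
  calc limsup (fun T => |(1 / T) * (∫ t in (0:ℝ)..T, x i t) - p i|) atTop
      ≤ limsup g atTop := limsup_le_limsup hfg
        (Filter.isCoboundedUnder_le_of_le atTop (x := 0) (fun T => abs_nonneg _))
        hgS.isBoundedUnder_le
    _ = S := hgS.limsup_eq
    _ ≤ SB * (mA * δ) := by
        rw [hSdef]
        calc ∑ j : Fin k, |Ahat⁻¹ i0 j| * (|a (j.1 + 1) (k + 1)| * δ)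
            ≤ ∑ j : Fin k, |Ahat⁻¹ i0 j| * (mA * δ) := by
              apply Finset.sum_le_sum
              intro j _
              apply mul_le_mul_of_nonneg_left _ (abs_nonneg _)
              apply mul_le_mul_of_nonneg_right _ hδ.le
              rw [hmAdef]
              exact Finset.single_le_sum (f := fun j' : Fin k => |a (j'.1 + 1) (k + 1)|)
                (fun j' _ => abs_nonneg _) (Finset.mem_univ j)
          _ = (∑ j : Fin k, |Ahat⁻¹ i0 j|) * (mA * δ) := (Finset.sum_mul _ _ _).symm
          _ ≤ SB * (mA * δ) := by
              apply mul_le_mul_of_nonneg_right _ (by positivity)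
              rw [hSBdef]
              exact Finset.single_le_sum
                (f := fun i' => ∑ j : Fin k, |Ahat⁻¹ i' j|)
                (fun i' _ => Finset.sum_nonneg fun j _ => abs_nonneg _)
                (Finset.mem_univ i0)
    _ ≤ (SB * mA + 1) * δ := by nlinarith
end
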